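/- arXiv:2104.01336 — 5 statements merged into one kernel-verified Lean document; each statement's English description precedes it below -/
import Mathlib

section
/- Let δ > 0 and P > 0, let ε be a 2×2 real matrix, and set Δ_δ²(ε) = δ + Δ²(ε). Define the fourth-order coefficient tensor a_{ij}^{kl} = (P / (2 Δ_δ(ε))) · ( S_{ij}^{kl} − (1/Δ_δ²(ε)) (Sε)_{ik} (Sε)_{jl} ). Then for every 2×2 real matrix d, the quadratic form satisfies Σ_{i,j,k,l} a_{ij}^{kl} d_{ik} d_{jl} ≥ (P δ / (2 Δ_δ(ε)³)) · Δ²(d). -/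
open Finset Real Matrix

/-- Hibler's quadratic form `Δ²(d)`. -/
noncomputable def Dsq (e : ℝ) (d : Matrix (Fin 2) (Fin 2) ℝ) : ℝ :=
  (d 0 0 + d 1 1)^2 + (1/e^2)*(d 0 0 - d 1 1)^2 + (1/e^2)*(d 0 1 + d 1 0)^2

/-- The 4×4 matrix representing Hibler's map `𝕊`. -/
noncomputable def S4 (e : ℝ) : Matrix (Fin 4) (Fin 4) ℝ :=
  !![1+1/e^2, 0, 0, 1-1/e^2;
     0, 1/e^2, 1/e^2, 0;
     0, 1/e^2, 1/e^2, 0;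
     1-1/e^2, 0, 0, 1+1/e^2]

/-- Identification of a 2×2 matrix with a vector in ℝ⁴. -/
def vec4 (d : Matrix (Fin 2) (Fin 2) ℝ) : Fin 4 → ℝ := ![d 0 0, d 0 1, d 1 0, d 1 1]

/-- Pair index `(i,k) ↦ 2i+k`. -/
def pidx (i k : Fin 2) : Fin 4 := ⟨2*i.1 + k.1, by have := i.2; have := k.2; omega⟩

/-- Hibler's tensor `𝕊_{ij}^{kl}`. -/
noncomputable def Sten (e : ℝ) (i j k l : Fin 2) : ℝ := S4 e (pidx i k) (pidx j l)

/-- The matrix `𝕊ε`. -/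
noncomputable def Smap (e : ℝ) (ε : Matrix (Fin 2) (Fin 2) ℝ) : Matrix (Fin 2) (Fin 2) ℝ :=
  fun i k => ∑ j : Fin 2, ∑ l : Fin 2, Sten e i j k l * ε j l

/-- Regularized `Δ_δ(ε) = √(δ + Δ²(ε))`. -/
noncomputable def Ddel (e δ : ℝ) (ε : Matrix (Fin 2) (Fin 2) ℝ) : ℝ :=
  Real.sqrt (δ + Dsq e ε)

/-- Principal coefficients `a_{ij}^{kl}` of Hibler's operator. -/
noncomputable def aCoef (e δ P : ℝ) (ε : Matrix (Fin 2) (Fin 2) ℝ) (i j k l : Fin 2) : ℝ :=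
  P/(2*Ddel e δ ε) * (Sten e i j k l - (1/(Ddel e δ ε)^2) * Smap e ε i k * Smap e ε j l)

lemma cs_aux (a A1 A2 A3 B1 B2 B3 : ℝ) (ha : 0 ≤ a) :
    (A1*B1 + a*A2*B2 + a*A3*B3)^2 ≤ (A1^2+a*A2^2+a*A3^2)*(B1^2+a*B2^2+a*B3^2) := by
  nlinarith [mul_nonneg ha (sq_nonneg (A1*B2 - A2*B1)),
    mul_nonneg ha (sq_nonneg (A1*B3 - A3*B1)),
    mul_nonneg (mul_nonneg ha ha) (sq_nonneg (A2*B3 - A3*B2))]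

set_option maxHeartbeats 1000000 in
/-- coercivity of the principal coefficients of Hibler's operator:
Σ a_{ij}^{kl} d_{ik} d_{jl} ≥ (Pδ/(2Δ_δ(ε)³)) Δ²(d). -/
theorem hibler_coefficient_coercivity (e δ P : ℝ) (he : 0 < e) (hδ : 0 < δ) (hP : 0 < P)
    (ε d : Matrix (Fin 2) (Fin 2) ℝ) :
    ∑ i : Fin 2, ∑ j : Fin 2, ∑ k : Fin 2, ∑ l : Fin 2,
        aCoef e δ P ε i j k l * d i k * d j l
      ≥ (P * δ / (2 * (Ddel e δ ε)^3)) * Dsq e d := by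
  have he2 : (0:ℝ) < 1/e^2 := by positivity
  have hDε : 0 ≤ Dsq e ε := by unfold Dsq; positivity
  set t := Ddel e δ ε with htdef
  have ht : 0 < t := Real.sqrt_pos.2 (by linarith)
  have ht2 : t^2 = δ + Dsq e ε := Real.sq_sqrt (by linarith)
  set B : ℝ := (ε 0 0 + ε 1 1)*(d 0 0 + d 1 1) + (1/e^2)*(ε 0 0 - ε 1 1)*(d 0 0 - d 1 1)
      + (1/e^2)*(ε 0 1 + ε 1 0)*(d 0 1 + d 1 0) with hB
  have hSten : ∑ i : Fin 2, ∑ j : Fin 2, ∑ k : Fin 2, ∑ l : Fin 2,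
      Sten e i j k l * d i k * d j l = Dsq e d := by
    simp only [Sten, S4, pidx, Dsq, Fin.sum_univ_two]
    norm_num [show ((⟨2,by omega⟩:Fin 4)) = 2 from rfl, show ((⟨3,by omega⟩:Fin 4)) = 3 from rfl, Matrix.cons_val_two, Matrix.cons_val_three]
    ring
  have hSmapB : ∑ i : Fin 2, ∑ k : Fin 2, Smap e ε i k * d i k = B := by
    simp only [Smap, Sten, S4, pidx, hB, Fin.sum_univ_two]
    norm_num [show ((⟨2,by omega⟩:Fin 4)) = 2 from rfl, show ((⟨3,by omega⟩:Fin 4)) = 3 from rfl, Matrix.cons_val_two, Matrix.cons_val_three]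
    ring
  have key : ∑ i : Fin 2, ∑ j : Fin 2, ∑ k : Fin 2, ∑ l : Fin 2,
        aCoef e δ P ε i j k l * d i k * d j l
      = P/(2*t) * (Dsq e d - (1/t^2) * B^2) := by
    rw [← hSten, ← hSmapB]
    simp only [aCoef, Fin.sum_univ_two, ← htdef]
    ring
  rw [key]
  have hCS : B^2 ≤ Dsq e ε * Dsq e d := by
    rw [hB]; unfold Dsq
    exact cs_aux (1/e^2) (ε 0 0 + ε 1 1) (ε 0 0 - ε 1 1) (ε 0 1 + ε 1 0)
      (d 0 0 + d 1 1) (d 0 0 - d 1 1) (d 0 1 + d 1 0) he2.le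
  have hDd : 0 ≤ Dsq e d := by unfold Dsq; positivity
  have h1 : Dsq e d - (1/t^2)*B^2 ≥ (δ/t^2) * Dsq e d := by
    rw [ge_iff_le, ← sub_nonneg]
    have heq : Dsq e d - 1/t^2*B^2 - δ/t^2*Dsq e d = (Dsq e ε * Dsq e d - B^2)/t^2 := by
      field_simp
      linear_combination (Dsq e d) * ht2
    rw [heq]
    exact div_nonneg (by linarith) (by positivity)
  have hc : P/(2*t) * ((δ/t^2)*Dsq e d) = P*δ/(2*t^3)*Dsq e d := by
    field_simp
  calc P/(2*t) * (Dsq e d - 1/t^2*B^2) ≥ P/(2*t) * ((δ/t^2)*Dsq e d) := by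
        apply mul_le_mul_of_nonneg_left h1 (by positivity)
    _ = P*δ/(2*t^3)*Dsq e d := hc
end

section
/- For any ξ ∈ ℝ² with |ξ| = 1 and any η ∈ ℂ² with |η| = 1, writing η = x + iy with x, y ∈ ℝ², one has Δ²(ξ ⊗ x) + Δ²(ξ ⊗ y) ≥ 1/e². -/
open Finset Real Matrix

/-- for unit ξ ∈ ℝ² and unit η = x + iy ∈ ℂ²,
Δ²(ξ ⊗ x) + Δ²(ξ ⊗ y) ≥ 1/e². -/
theorem hibler_rank_one_lower_bound (e : ℝ) (he : 0 < e) (ξ x y : Fin 2 → ℝ)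
    (hξ : ξ 0^2 + ξ 1^2 = 1) (hη : x 0^2 + x 1^2 + y 0^2 + y 1^2 = 1) :
    Dsq e (Matrix.of fun i j => ξ i * x j) + Dsq e (Matrix.of fun i j => ξ i * y j)
      ≥ 1/e^2 := by
  have hc : (0:ℝ) < 1/e^2 := by positivity
  simp only [Dsq, Matrix.of_apply]
  have hx : (ξ 0 * x 0 - ξ 1 * x 1)^2 + (ξ 0 * x 1 + ξ 1 * x 0)^2
      = (ξ 0^2 + ξ 1^2) * (x 0^2 + x 1^2) := by ring
  have hy : (ξ 0 * y 0 - ξ 1 * y 1)^2 + (ξ 0 * y 1 + ξ 1 * y 0)^2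
      = (ξ 0^2 + ξ 1^2) * (y 0^2 + y 1^2) := by ring
  have h1 : 1/e^2 * ((ξ 0 * x 0 - ξ 1 * x 1)^2 + (ξ 0 * x 1 + ξ 1 * x 0)^2)
      = 1/e^2 * (x 0^2 + x 1^2) := by rw [hx, hξ, one_mul]
  have h2 : 1/e^2 * ((ξ 0 * y 0 - ξ 1 * y 1)^2 + (ξ 0 * y 1 + ξ 1 * y 0)^2)
      = 1/e^2 * (y 0^2 + y 1^2) := by rw [hy, hξ, one_mul]
  nlinarith [sq_nonneg (ξ 0 * x 0 + ξ 1 * x 1), sq_nonneg (ξ 0 * y 0 + ξ 1 * y 1), h1, h2, hc.le]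
end

section
/- The symbol of the principal part of Hibler's operator is strongly elliptic: for every ξ ∈ ℝ² with |ξ| = 1 and every η ∈ ℂ² with |η| = 1, Re ⟨A_#(ξ) η, η⟩ ≥ c δ / e², where A_#(ξ)_{ij} = Σ_{k,l} a_{ij}^{kl} ξ_k ξ_l, the coefficients a_{ij}^{kl} = (P/(2Δ_δ(ε)))(S_{ij}^{kl} − Δ_δ(ε)^{−2} (Sε)_{ik}(Sε)_{jl}) are evaluated at a fixed 2×2 matrix ε, P > 0, δ > 0, and c = P/(2 Δ_δ(ε)³) > 0. -/
lemma hibler_abstract (δ f U Q1 Q2 Z1 Z2 : ℝ) (hδ : 0 < δ) (hU : 0 ≤ U)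
    (h1 : Z1^2 ≤ U*Q1) (h2 : Z2^2 ≤ U*Q2) (hQ : f ≤ Q1 + Q2) :
    δ*f ≤ (δ+U)*(Q1+Q2) - (Z1^2 + Z2^2) := by
  nlinarith [mul_nonneg hδ.le (by linarith : (0:ℝ) ≤ Q1 + Q2 - f)]

lemma hibler_key (f δ p q r s x y a b c d D : ℝ) (hf : 0 < f) (hδ : 0 < δ)
    (hxy : x^2+y^2 = 1) (habcd : a^2+b^2+c^2+d^2 = 1)
    (hD2 : D^2 = δ + ((p+s)^2 + f*(p-s)^2 + f*(q+r)^2)) :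
    δ*f ≤ D^2 * (((a*x+c*y)^2 + f*(a*x-c*y)^2 + f*(a*y+c*x)^2)
               + ((b*x+d*y)^2 + f*(b*x-d*y)^2 + f*(b*y+d*x)^2))
         - (((p+s)*(a*x+c*y) + f*(p-s)*(a*x-c*y) + f*(q+r)*(a*y+c*x))^2
          + ((p+s)*(b*x+d*y) + f*(p-s)*(b*x-d*y) + f*(q+r)*(b*y+d*x))^2) := by
  rw [hD2]
  have e1 : (a^2+b^2+c^2+d^2)*(x^2+y^2) = 1 := by rw [hxy, habcd]; ring
  set u1 := p+s with hu1; set u2 := p-s with hu2; set u3 := q+r with hu3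
  set v1 := a*x+c*y with hv1; set v2 := a*x-c*y with hv2; set v3 := a*y+c*x with hv3
  set w1 := b*x+d*y with hw1; set w2 := b*x-d*y with hw2; set w3 := b*y+d*x with hw3
  have hU : (0:ℝ) ≤ u1^2 + f*u2^2 + f*u3^2 := by positivity
  have hcs1 : (u1*v1 + f*u2*v2 + f*u3*v3)^2
      ≤ (u1^2 + f*u2^2 + f*u3^2) * (v1^2 + f*v2^2 + f*v3^2) := by
    have hid : (u1^2 + f*u2^2 + f*u3^2) * (v1^2 + f*v2^2 + f*v3^2)
        - (u1*v1 + f*u2*v2 + f*u3*v3)^2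
        = f*(u2*v1 - u1*v2)^2 + f*(u3*v1 - u1*v3)^2 + f^2*(u2*v3 - u3*v2)^2 := by ring
    linarith [mul_nonneg hf.le (sq_nonneg (u2*v1 - u1*v2)),
      mul_nonneg hf.le (sq_nonneg (u3*v1 - u1*v3)),
      mul_nonneg (mul_nonneg hf.le hf.le) (sq_nonneg (u2*v3 - u3*v2)), hid]
  have hcs2 : (u1*w1 + f*u2*w2 + f*u3*w3)^2
      ≤ (u1^2 + f*u2^2 + f*u3^2) * (w1^2 + f*w2^2 + f*w3^2) := by
    have hid : (u1^2 + f*u2^2 + f*u3^2) * (w1^2 + f*w2^2 + f*w3^2)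
        - (u1*w1 + f*u2*w2 + f*u3*w3)^2
        = f*(u2*w1 - u1*w2)^2 + f*(u3*w1 - u1*w3)^2 + f^2*(u2*w3 - u3*w2)^2 := by ring
    linarith [mul_nonneg hf.le (sq_nonneg (u2*w1 - u1*w2)),
      mul_nonneg hf.le (sq_nonneg (u3*w1 - u1*w3)),
      mul_nonneg (mul_nonneg hf.le hf.le) (sq_nonneg (u2*w3 - u3*w2)), hid]
  have hQ : f ≤ (v1^2 + f*v2^2 + f*v3^2) + (w1^2 + f*w2^2 + f*w3^2) := by
    have hQH : (v1^2 + f*v2^2 + f*v3^2) + (w1^2 + f*w2^2 + f*w3^2)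
        = v1^2 + w1^2 + f := by
      rw [hv1, hv2, hv3, hw1, hw2, hw3]; linear_combination f*e1
    linarith [sq_nonneg v1, sq_nonneg w1, hQH]
  have := hibler_abstract δ f (u1^2 + f*u2^2 + f*u3^2)
    (v1^2 + f*v2^2 + f*v3^2) (w1^2 + f*w2^2 + f*w3^2)
    (u1*v1 + f*u2*v2 + f*u3*v3) (u1*w1 + f*u2*w2 + f*u3*w3)
    hδ hU hcs1 hcs2 hQ
  linarith [this]


open Finset Real Matrix

set_option maxHeartbeats 4000000 in
/-- strong ellipticity of the symbol of the principal part of Hibler's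
operator: Re ⟨A_#(ξ)η, η⟩ ≥ cδ/e² with c = P/(2Δ_δ(ε)³), for unit ξ ∈ ℝ², η ∈ ℂ². -/
theorem hibler_symbol_strongly_elliptic (e δ P : ℝ) (he : 0 < e) (hδ : 0 < δ) (hP : 0 < P)
    (ε : Matrix (Fin 2) (Fin 2) ℝ)
    (ξ : Fin 2 → ℝ) (hξ : ξ 0^2 + ξ 1^2 = 1)
    (η : Fin 2 → ℂ) (hη : ‖η 0‖^2 + ‖η 1‖^2 = 1) :
    (∑ i : Fin 2, (∑ j : Fin 2,
        ((∑ k : Fin 2, ∑ l : Fin 2, aCoef e δ P ε i j k l * ξ k * ξ l : ℝ) : ℂ) * η j)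
          * (starRingEnd ℂ) (η i)).re
      ≥ (P / (2 * (Ddel e δ ε)^3)) * δ / e^2 := by
  have he2 : (0:ℝ) < e^2 := by positivity
  have hDsqnn : 0 ≤ Dsq e ε := by unfold Dsq; positivity
  have hD2 : (Ddel e δ ε)^2 = δ + Dsq e ε := Real.sq_sqrt (by linarith)
  have hDpos : 0 < Ddel e δ ε := Real.sqrt_pos.mpr (by linarith)
  have hab : (η 0).re^2 + (η 0).im^2 + ((η 1).re^2 + (η 1).im^2) = 1 := by
    have h0 := Complex.sq_norm (η 0)
    have h1 := Complex.sq_norm (η 1)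
    rw [Complex.normSq_apply] at h0 h1
    rw [h0, h1] at hη
    linear_combination hη
  set Dd := Ddel e δ ε with hDd
  have hL : (∑ i : Fin 2, (∑ j : Fin 2,
        ((∑ k : Fin 2, ∑ l : Fin 2, aCoef e δ P ε i j k l * ξ k * ξ l : ℝ) : ℂ) * η j)
          * (starRingEnd ℂ) (η i)).re
      = P/(2*Dd^3) * (Dd^2 * ((((η 0).re*ξ 0+(η 1).re*ξ 1)^2 + (1/e^2)*((η 0).re*ξ 0-(η 1).re*ξ 1)^2 + (1/e^2)*((η 0).re*ξ 1+(η 1).re*ξ 0)^2)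
               + (((η 0).im*ξ 0+(η 1).im*ξ 1)^2 + (1/e^2)*((η 0).im*ξ 0-(η 1).im*ξ 1)^2 + (1/e^2)*((η 0).im*ξ 1+(η 1).im*ξ 0)^2))
         - (((ε 0 0+ε 1 1)*((η 0).re*ξ 0+(η 1).re*ξ 1) + (1/e^2)*(ε 0 0-ε 1 1)*((η 0).re*ξ 0-(η 1).re*ξ 1) + (1/e^2)*(ε 0 1+ε 1 0)*((η 0).re*ξ 1+(η 1).re*ξ 0))^2
          + ((ε 0 0+ε 1 1)*((η 0).im*ξ 0+(η 1).im*ξ 1) + (1/e^2)*(ε 0 0-ε 1 1)*((η 0).im*ξ 0-(η 1).im*ξ 1) + (1/e^2)*(ε 0 1+ε 1 0)*((η 0).im*ξ 1+(η 1).im*ξ 0))^2)) := by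
    simp only [Fin.sum_univ_two, Complex.add_re, Complex.mul_re, Complex.ofReal_re,
      Complex.ofReal_im, Complex.conj_re, Complex.conj_im, Complex.add_im, Complex.mul_im]
    have haC : ∀ i j k l, aCoef e δ P ε i j k l
        = P/(2*Dd) * (Sten e i j k l - 1/Dd^2 * Smap e ε i k * Smap e ε j l) := by
      intro i j k l; rw [hDd]; rfl
    simp only [haC]
    simp [Sten, Smap, S4, pidx, Fin.sum_univ_two]
    field_simp
    ring
  rw [ge_iff_le, hL]
  have hD2' : Dd^2 = δ + ((ε 0 0+ε 1 1)^2 + (1/e^2)*(ε 0 0-ε 1 1)^2 + (1/e^2)*(ε 0 1+ε 1 0)^2) := by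
    rw [hD2]; rfl
  have hkey := hibler_key (1/e^2) δ (ε 0 0) (ε 0 1) (ε 1 0) (ε 1 1) (ξ 0) (ξ 1)
    (η 0).re (η 0).im (η 1).re (η 1).im Dd (by positivity) hδ hξ (by linarith) hD2'
  have hc : (0:ℝ) ≤ P/(2*Dd^3) := by positivity
  have hrw : P / (2 * Dd^3) * δ / e^2 = P/(2*Dd^3) * (δ * (1/e^2)) := by ring
  rw [hrw]
  exact mul_le_mul_of_nonneg_left hkey hc
end

section
/- Let ξ, ν ∈ ℝ² with |ξ| = |ν| = 1 and ξ · ν = 0, and let u, v ∈ ℂ². Then Re Σ_{i,j,k,l=1}^2 a_{ij}^{kl} (ξ_l u_j − ν_l v_j) conj(ξ_k u_i − ν_k v_i) ≥ 0, where a_{ij}^{kl} are the principal coefficients of Hibler's operator evaluated at a fixed symmetric ε with P > 0 and δ > 0. -/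
set_option maxHeartbeats 1000000


open Finset Real Matrix

lemma p00 : pidx 0 0 = 0 := rfl
lemma p01 : pidx 0 1 = 1 := rfl
lemma p10 : pidx 1 0 = 2 := rfl
lemma p11 : pidx 1 1 = 3 := rfl

lemma st0000 (e : ℝ) : Sten e 0 0 0 0 = 1+1/e^2 := by
  show S4 e 0 0 = _; norm_num [S4]

lemma st0001 (e : ℝ) : Sten e 0 0 0 1 = 0 := by
  show S4 e 0 1 = _; norm_num [S4]

lemma st0100 (e : ℝ) : Sten e 0 1 0 0 = 0 := by
  show S4 e 0 2 = _; simp [S4]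

lemma st0101 (e : ℝ) : Sten e 0 1 0 1 = 1-1/e^2 := by
  show S4 e 0 3 = _; simp [S4]

lemma st0010 (e : ℝ) : Sten e 0 0 1 0 = 0 := by
  show S4 e 1 0 = _; norm_num [S4]

lemma st0011 (e : ℝ) : Sten e 0 0 1 1 = 1/e^2 := by
  show S4 e 1 1 = _; norm_num [S4]

lemma st0110 (e : ℝ) : Sten e 0 1 1 0 = 1/e^2 := by
  show S4 e 1 2 = _; simp [S4]

lemma st0111 (e : ℝ) : Sten e 0 1 1 1 = 0 := by
  show S4 e 1 3 = _; simp [S4]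

lemma st1000 (e : ℝ) : Sten e 1 0 0 0 = 0 := by
  show S4 e 2 0 = _; simp [S4]

lemma st1001 (e : ℝ) : Sten e 1 0 0 1 = 1/e^2 := by
  show S4 e 2 1 = _; simp [S4]

lemma st1100 (e : ℝ) : Sten e 1 1 0 0 = 1/e^2 := by
  show S4 e 2 2 = _; simp [S4]

lemma st1101 (e : ℝ) : Sten e 1 1 0 1 = 0 := by
  show S4 e 2 3 = _; simp [S4]

lemma st1010 (e : ℝ) : Sten e 1 0 1 0 = 1-1/e^2 := by
  show S4 e 3 0 = _; simp [S4]

lemma st1011 (e : ℝ) : Sten e 1 0 1 1 = 0 := by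
  show S4 e 3 1 = _; simp [S4]

lemma st1110 (e : ℝ) : Sten e 1 1 1 0 = 0 := by
  show S4 e 3 2 = _; simp [S4]

lemma st1111 (e : ℝ) : Sten e 1 1 1 1 = 1+1/e^2 := by
  show S4 e 3 3 = _; simp [S4]


lemma Smap00 (e : ℝ) (ε : Matrix (Fin 2) (Fin 2) ℝ) :
    Smap e ε 0 0 = (1+1/e^2)*ε 0 0 + (1-1/e^2)*ε 1 1 := by
  simp only [Smap, Fin.sum_univ_two, Sten, p00, p01, p10, p11, S4]
  simp only [Matrix.of_apply, Matrix.cons_val', Matrix.cons_val, Matrix.empty_val', Matrix.cons_val_fin_one]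
  norm_num [Matrix.cons_val_zero, Matrix.cons_val_one, Matrix.head_cons]

lemma Smap01 (e : ℝ) (ε : Matrix (Fin 2) (Fin 2) ℝ) :
    Smap e ε 0 1 = (1/e^2)*(ε 0 1 + ε 1 0) := by
  simp only [Smap, Fin.sum_univ_two, Sten, p00, p01, p10, p11, S4]
  simp only [Matrix.of_apply, Matrix.cons_val', Matrix.cons_val, Matrix.empty_val', Matrix.cons_val_fin_one]
  norm_num [Matrix.cons_val_zero, Matrix.cons_val_one, Matrix.head_cons]
  ring

lemma Smap10 (e : ℝ) (ε : Matrix (Fin 2) (Fin 2) ℝ) :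
    Smap e ε 1 0 = (1/e^2)*(ε 0 1 + ε 1 0) := by
  simp only [Smap, Fin.sum_univ_two, Sten, p00, p01, p10, p11, S4]
  simp only [Matrix.of_apply, Matrix.cons_val', Matrix.cons_val, Matrix.empty_val', Matrix.cons_val_fin_one]
  norm_num [Matrix.cons_val_zero, Matrix.cons_val_one, Matrix.head_cons]
  ring

lemma Smap11 (e : ℝ) (ε : Matrix (Fin 2) (Fin 2) ℝ) :
    Smap e ε 1 1 = (1-1/e^2)*ε 0 0 + (1+1/e^2)*ε 1 1 := by
  simp only [Smap, Fin.sum_univ_two, Sten, p00, p01, p10, p11, S4]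
  simp only [Matrix.of_apply, Matrix.cons_val', Matrix.cons_val, Matrix.empty_val', Matrix.cons_val_fin_one]
  norm_num [Matrix.cons_val_zero, Matrix.cons_val_one, Matrix.head_cons]

lemma cs_aux_s8 (w a b c x y z : ℝ) (hw : 0 ≤ w) :
    (a*x + w*b*y + w*c*z)^2 ≤ (a^2 + w*b^2 + w*c^2) * (x^2 + w*y^2 + w*z^2) := by
  nlinarith [mul_nonneg hw (sq_nonneg (a*y - b*x)), mul_nonneg hw (sq_nonneg (a*z - c*x)),
    mul_nonneg (mul_nonneg hw hw) (sq_nonneg (b*z - c*y))]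

lemma key (e δ P : ℝ) (he : 0 < e) (hδ : 0 < δ) (hP : 0 < P)
    (ε d : Matrix (Fin 2) (Fin 2) ℝ) :
    0 ≤ ∑ i : Fin 2, ∑ j : Fin 2, ∑ k : Fin 2, ∑ l : Fin 2,
        aCoef e δ P ε i j k l * d i k * d j l := by
  have he2 : (0:ℝ) < 1/e^2 := by positivity
  have hDε : 0 ≤ Dsq e ε := by unfold Dsq; positivity
  have hDd : 0 ≤ Dsq e d := by unfold Dsq; positivity
  have hΔpos : 0 < Ddel e δ ε := Real.sqrt_pos.mpr (by linarith)
  have hΔsq : (Ddel e δ ε)^2 = δ + Dsq e ε := Real.sq_sqrt (by linarith)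
  set Δ := Ddel e δ ε with hΔdef
  have hΔne : Δ ≠ 0 := ne_of_gt hΔpos
  set T : ℝ := (ε 0 0 + ε 1 1)*(d 0 0 + d 1 1) + (1/e^2)*(ε 0 0 - ε 1 1)*(d 0 0 - d 1 1)
      + (1/e^2)*(ε 0 1 + ε 1 0)*(d 0 1 + d 1 0) with hT
  have heq : (∑ i : Fin 2, ∑ j : Fin 2, ∑ k : Fin 2, ∑ l : Fin 2,
        aCoef e δ P ε i j k l * d i k * d j l)
      = P/(2*Δ) * (Dsq e d - (1/Δ^2) * T^2) := by
    simp only [aCoef, Fin.sum_univ_two, ← hΔdef,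
      st0000, st0001, st0010, st0011, st0100, st0101, st0110, st0111,
      st1000, st1001, st1010, st1011, st1100, st1101, st1110, st1111,
      Smap00, Smap01, Smap10, Smap11, Dsq, hT]
    field_simp
    ring
  have hCS : T^2 ≤ Dsq e ε * Dsq e d := by
    have h := cs_aux_s8 (1/e^2) (ε 0 0 + ε 1 1) (ε 0 0 - ε 1 1) (ε 0 1 + ε 1 0)
      (d 0 0 + d 1 1) (d 0 0 - d 1 1) (d 0 1 + d 1 0) he2.le
    simp only [Dsq, hT]
    calc ((ε 0 0 + ε 1 1)*(d 0 0 + d 1 1) + (1/e^2)*(ε 0 0 - ε 1 1)*(d 0 0 - d 1 1)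
          + (1/e^2)*(ε 0 1 + ε 1 0)*(d 0 1 + d 1 0))^2
        = ((ε 0 0 + ε 1 1)*(d 0 0 + d 1 1) + (1/e^2)*(ε 0 0 - ε 1 1)*(d 0 0 - d 1 1)
          + (1/e^2)*(ε 0 1 + ε 1 0)*(d 0 1 + d 1 0))^2 := rfl
      _ ≤ _ := by
        convert h using 2 <;> ring
  rw [heq]
  have h1 : (0:ℝ) ≤ P/(2*Δ) := by positivity
  have h2 : (1/Δ^2) * T^2 ≤ Dsq e d := by
    rw [div_mul_eq_mul_div, one_mul, div_le_iff₀ (by positivity)]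
    calc T^2 ≤ Dsq e ε * Dsq e d := hCS
      _ ≤ (δ + Dsq e ε) * Dsq e d := by nlinarith
      _ = Dsq e d * Δ^2 := by rw [hΔsq]; ring
  exact mul_nonneg h1 (by linarith)

/-- nonnegativity in the Lopatinskii–Shapiro condition:
Re Σ a_{ij}^{kl} (ξ_l u_j − ν_l v_j) conj(ξ_k u_i − ν_k v_i) ≥ 0. -/
theorem hibler_ls_nonneg (e δ P : ℝ) (he : 0 < e) (hδ : 0 < δ) (hP : 0 < P)
    (ε : Matrix (Fin 2) (Fin 2) ℝ) (hε : ε.IsSymm)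
    (ξ ν : Fin 2 → ℝ) (hξ : ξ 0^2 + ξ 1^2 = 1) (hν : ν 0^2 + ν 1^2 = 1)
    (horth : ξ 0 * ν 0 + ξ 1 * ν 1 = 0) (u v : Fin 2 → ℂ) :
    0 ≤ (∑ i : Fin 2, ∑ j : Fin 2, ∑ k : Fin 2, ∑ l : Fin 2,
        (aCoef e δ P ε i j k l : ℂ) * ((ξ l : ℂ) * u j - (ν l : ℂ) * v j)
          * (starRingEnd ℂ) ((ξ k : ℂ) * u i - (ν k : ℂ) * v i)).re := by
  have h1 := key e δ P he hδ hP ε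
    (Matrix.of fun i k => ξ k * (u i).re - ν k * (v i).re)
  have h2 := key e δ P he hδ hP ε
    (Matrix.of fun i k => ξ k * (u i).im - ν k * (v i).im)
  simp only [Fin.sum_univ_two, Matrix.of_apply] at h1 h2 ⊢
  simp only [Complex.add_re, Complex.mul_re, Complex.mul_im, Complex.sub_re, Complex.sub_im,
    Complex.ofReal_re, Complex.ofReal_im, Complex.conj_re, Complex.conj_im]
  linarith [h1, h2]
end

section
/- Let a_{ij}^{kl} (i,j,k,l ∈ {1,2}) be real coefficients satisfying a_{ij}^{kl} = a_{kj}^{il} = a_{il}^{kj} and the coercivity Σ_{i,j,k,l} a_{ij}^{kl} d_{ik} d_{jl} ≥ c Δ²(d) for all real 2×2 matrices d, with c > 0. Then for every ξ ∈ ℝ², η ∈ ℂ² with |ξ| = |η| = 1, writing η = x + iy: Re Σ_{i,j,k,l} a_{ij}^{kl} (ξ⊗η)_{jl} conj((ξ⊗η))_{ik} = Σ a_{ij}^{kl}(ξ⊗x)_{jl}(ξ⊗x)_{ik} + Σ a_{ij}^{kl}(ξ⊗y)_{jl}(ξ⊗y)_{ik} ≥ c/e². -/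
open Finset Complex

/-- for coefficients with the symmetries a_{ij}^{kl} = a_{kj}^{il} = a_{il}^{kj}
and coercivity Σ a_{ij}^{kl} d_{ik} d_{jl} ≥ c Δ²(d), the symbol form at unit ξ ∈ ℝ² and
unit η = x + iy ∈ ℂ² splits into real and imaginary parts and is bounded below by c/e². -/
theorem hibler_symbol_lower_bound (e c : ℝ) (he : 0 < e) (hc : 0 < c)
    (a : Fin 2 → Fin 2 → Fin 2 → Fin 2 → ℝ)
    (hsym : ∀ i j k l, a i j k l = a k j i l ∧ a i j k l = a i l k j)
    (hcoer : ∀ d : Matrix (Fin 2) (Fin 2) ℝ,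
      (∑ i : Fin 2, ∑ j : Fin 2, ∑ k : Fin 2, ∑ l : Fin 2, a i j k l * d i k * d j l)
        ≥ c * Dsq e d)
    (ξ x y : Fin 2 → ℝ) (hξ : ξ 0^2 + ξ 1^2 = 1)
    (hη : x 0^2 + x 1^2 + y 0^2 + y 1^2 = 1) :
    (∑ i : Fin 2, ∑ j : Fin 2, ∑ k : Fin 2, ∑ l : Fin 2,
        (a i j k l : ℂ) * ((ξ l : ℂ) * (x j + y j * Complex.I))
          * (starRingEnd ℂ) ((ξ k : ℂ) * (x i + y i * Complex.I))).re
      = (∑ i : Fin 2, ∑ j : Fin 2, ∑ k : Fin 2, ∑ l : Fin 2,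
            a i j k l * (ξ l * x j) * (ξ k * x i))
        + (∑ i : Fin 2, ∑ j : Fin 2, ∑ k : Fin 2, ∑ l : Fin 2,
            a i j k l * (ξ l * y j) * (ξ k * y i)) ∧
    (∑ i : Fin 2, ∑ j : Fin 2, ∑ k : Fin 2, ∑ l : Fin 2,
          a i j k l * (ξ l * x j) * (ξ k * x i))
        + (∑ i : Fin 2, ∑ j : Fin 2, ∑ k : Fin 2, ∑ l : Fin 2,
            a i j k l * (ξ l * y j) * (ξ k * y i)) ≥ c / e^2 := by
  constructor
  · simp only [Fin.sum_univ_two, Complex.add_re, Complex.mul_re, Complex.mul_im,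
      Complex.conj_re, Complex.conj_im, Complex.ofReal_re, Complex.ofReal_im,
      Complex.add_im, Complex.I_re, Complex.I_im, map_mul, Complex.conj_ofReal]
    ring
  · have hx := hcoer (Matrix.of fun i k => ξ k * x i)
    have hy := hcoer (Matrix.of fun i k => ξ k * y i)
    have hxq : (∑ i : Fin 2, ∑ j : Fin 2, ∑ k : Fin 2, ∑ l : Fin 2,
        a i j k l * (ξ l * x j) * (ξ k * x i)) ≥ c * Dsq e (Matrix.of fun i k => ξ k * x i) := by
      convert hx using 1
      simp only [Fin.sum_univ_two, Matrix.of_apply]; ring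
    have hyq : (∑ i : Fin 2, ∑ j : Fin 2, ∑ k : Fin 2, ∑ l : Fin 2,
        a i j k l * (ξ l * y j) * (ξ k * y i)) ≥ c * Dsq e (Matrix.of fun i k => ξ k * y i) := by
      convert hy using 1
      simp only [Fin.sum_univ_two, Matrix.of_apply]; ring
    have he2 : (0:ℝ) < e^2 := by positivity
    have hinv : (0:ℝ) < 1 / e^2 := by positivity
    have hD : Dsq e (Matrix.of fun i k => ξ k * x i)
        + Dsq e (Matrix.of fun i k => ξ k * y i) ≥ 1 / e^2 := by
      simp only [Dsq, Matrix.of_apply]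
      have h1 : (ξ 0 * x 0 - ξ 1 * x 1)^2 + (ξ 1 * x 0 + ξ 0 * x 1)^2
          + (ξ 0 * y 0 - ξ 1 * y 1)^2 + (ξ 1 * y 0 + ξ 0 * y 1)^2 = 1 := by
        nlinarith [hξ, hη]
      nlinarith [sq_nonneg (ξ 0 * x 0 + ξ 1 * x 1), sq_nonneg (ξ 0 * y 0 + ξ 1 * y 1),
        hinv, h1]
    have key : c * Dsq e (Matrix.of fun i k => ξ k * x i)
        + c * Dsq e (Matrix.of fun i k => ξ k * y i) ≥ c / e^2 := by
      have := mul_le_mul_of_nonneg_left hD hc.le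
      calc c / e^2 = c * (1 / e^2) := by ring
        _ ≤ _ := by linarith
    linarith
end
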